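/- For every r ≥ 2 and every k ∈ ℕ with k ≥ 1, there exists a matrix M ∈ GL_r(ℤ) with |det(M − E)| = k. -/

import Mathlib

open Matrix

set_option linter.unnecessarySeqFocus false

lemma fromBlocks_sub' {m n : ℕ} (A B : Matrix (Fin m) (Fin m) ℤ)
    (C D : Matrix (Fin n) (Fin n) ℤ) :
    fromBlocks A 0 0 C - fromBlocks B 0 0 D = fromBlocks (A - B) 0 0 (C - D) := by
  ext i j; cases i <;> cases j <;> simp [Matrix.fromBlocks, Matrix.sub_apply]

lemma reindex_sub_one {α β : Type*} [Fintype α] [Fintype β] [DecidableEq α] [DecidableEq β]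
    (e : α ≃ β) (M : Matrix α α ℤ) :
    (Matrix.reindex e e M) - 1 = Matrix.reindex e e (M - 1) := by
  ext i j
  simp [Matrix.reindex, Matrix.sub_apply, Matrix.one_apply, Equiv.symm_apply_eq,
    EmbeddingLike.apply_eq_iff_eq]

/-- Combine two square blocks into a block-diagonal matrix over `Fin (m+n)`. -/
lemma combine_blocks {m n : ℕ} (A : Matrix (Fin m) (Fin m) ℤ)
    (D : Matrix (Fin n) (Fin n) ℤ) :
    ∃ M : Matrix (Fin (m + n)) (Fin (m + n)) ℤ,
      M.det = A.det * D.det ∧ (M - 1).det = (A - 1).det * (D - 1).det := by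
  refine ⟨Matrix.reindex finSumFinEquiv finSumFinEquiv (Matrix.fromBlocks A 0 0 D), ?_, ?_⟩
  · rw [Matrix.det_reindex_self, Matrix.det_fromBlocks_zero₂₁]
  · rw [reindex_sub_one, Matrix.det_reindex_self, ← Matrix.fromBlocks_one,
      fromBlocks_sub', Matrix.det_fromBlocks_zero₂₁]

/-- Transport along an equality of sizes. -/
lemma resize {m n : ℕ} (h : m = n) (M : Matrix (Fin m) (Fin m) ℤ) :
    ∃ M' : Matrix (Fin n) (Fin n) ℤ, M'.det = M.det ∧ (M' - 1).det = (M - 1).det := by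
  subst h; exact ⟨M, rfl, rfl⟩

/-- For every `s ≠ 1` there is `D ∈ GL_s(ℤ)` with `D - 1` also invertible. -/
lemma exists_aux : ∀ s : ℕ, s ≠ 1 →
    ∃ D : Matrix (Fin s) (Fin s) ℤ, IsUnit D.det ∧ IsUnit (D - 1).det := by
  intro s
  induction s using Nat.strong_induction_on with
  | _ s ih =>
    intro hs
    match s, hs with
    | 0, _ => exact ⟨1, by simp⟩
    | 2, _ =>
      refine ⟨!![0, -1; 1, 3], ?_, ?_⟩
      · rw [Matrix.det_fin_two]; norm_num
      · have h : (!![0, -1; 1, 3] : Matrix (Fin 2) (Fin 2) ℤ) - 1 = !![-1, -1; 1, 2] := by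
          ext i j; fin_cases i <;> fin_cases j <;>
            norm_num [Matrix.sub_apply, Matrix.one_apply, Fin.ext_iff]
        rw [h, Matrix.det_fin_two]; norm_num
    | 3, _ =>
      refine ⟨!![0, 0, 1; 1, 0, -1; 0, 1, 0], ?_, ?_⟩
      · simp [Matrix.det_fin_three]
      · have h : (!![0, 0, 1; 1, 0, -1; 0, 1, 0] : Matrix (Fin 3) (Fin 3) ℤ) - 1
            = !![-1, 0, 1; 1, -1, -1; 0, 1, -1] := by
          ext i j; fin_cases i <;> fin_cases j <;>
            norm_num [Matrix.sub_apply, Matrix.one_apply, Fin.ext_iff]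
        have h2 : (!![-1, 0, 1; 1, -1, -1; 0, 1, -1] : Matrix (Fin 3) (Fin 3) ℤ).det = -1 := by
          simp [Matrix.det_fin_three, Matrix.vecHead, Matrix.vecTail]
        rw [h, h2]; exact isUnit_one.neg
    | (t + 4), _ =>
      obtain ⟨D, hD1, hD2⟩ := ih (t + 2) (by omega) (by omega)
      obtain ⟨A, hA1, hA2⟩ := ih 2 (by omega) (by omega)
      obtain ⟨M, hM1, hM2⟩ := combine_blocks A D
      obtain ⟨M', hM1', hM2'⟩ := resize (show 2 + (t + 2) = t + 4 by omega) M
      exact ⟨M', by rw [hM1', hM1]; exact hA1.mul hD1,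
        by rw [hM2', hM2]; exact hA2.mul hD2⟩

/-- For every `r ≥ 2` and every `k ≥ 1` there exists a matrix `M ∈ GL_r(ℤ)`
with `|det (M - E)| = k`. -/
theorem exists_GLr_det_sub_one (r k : ℕ) (hr : 2 ≤ r) (hk : 1 ≤ k) :
    ∃ M : Matrix (Fin r) (Fin r) ℤ, IsUnit M.det ∧ ((M - 1).det).natAbs = k := by
  by_cases hr3 : r = 3
  · -- the companion matrix of `x³ + kx - 1`
    subst hr3
    refine ⟨!![0, 0, 1; 1, 0, -(k : ℤ); 0, 1, 0], ?_, ?_⟩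
    · simp [Matrix.det_fin_three]
    · have h : (!![0, 0, 1; 1, 0, -(k : ℤ); 0, 1, 0] : Matrix (Fin 3) (Fin 3) ℤ) - 1
          = !![-1, 0, 1; 1, -1, -(k : ℤ); 0, 1, -1] := by
        ext i j; fin_cases i <;> fin_cases j <;>
          norm_num [Matrix.sub_apply, Matrix.one_apply, Fin.ext_iff]
      have h2 : ((!![0, 0, 1; 1, 0, -(k : ℤ); 0, 1, 0] : Matrix (Fin 3) (Fin 3) ℤ)
          - 1).det = -(k : ℤ) := by
        rw [h]; simp [Matrix.det_fin_three]; ring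
      rw [h2]; simp
  · set A : Matrix (Fin 2) (Fin 2) ℤ := !![0, -1; 1, (k : ℤ) + 2] with hA
    have hAdet : A.det = 1 := by rw [hA, Matrix.det_fin_two]; norm_num
    have hAsub : (A - 1).det = -(k : ℤ) := by
      have h : A - 1 = !![-1, -1; 1, (k : ℤ) + 1] := by
        ext i j; fin_cases i <;> fin_cases j <;>
          norm_num [hA, Matrix.sub_apply, Matrix.one_apply, Fin.ext_iff] <;> ring
      rw [h]; norm_num [Matrix.det_fin_two]
    obtain ⟨D, hD1, hD2⟩ := exists_aux (r - 2) (by omega)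
    obtain ⟨M, hM1, hM2⟩ := combine_blocks A D
    obtain ⟨M', hM1', hM2'⟩ := resize (show 2 + (r - 2) = r by omega) M
    refine ⟨M', ?_, ?_⟩
    · rw [hM1', hM1, hAdet, one_mul]; exact hD1
    · rw [hM2', hM2, hAsub]
      rcases Int.isUnit_iff.mp hD2 with hu | hu <;> rw [hu] <;>
        simp [Int.natAbs_mul]
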